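/- The one-sided derivatives of Λᵃ and Λᵒ on [0, π] vanish at both endpoints: (Λᵃ)'(0) = (Λᵃ)'(π) = (Λᵒ)'(0) = (Λᵒ)'(π) = 0. Moreover, for the dispersion relations λᵃ = √Λᵃ and λᵒ = √Λᵒ one has lim_{η→0⁺} λᵃ(η)/η = 1, (λᵃ)'(π) = 0, and (λᵒ)'(0) = (λᵒ)'(π) = 0 (one-sided derivatives within [0, π]). -/

import Mathlib

open Real Filter

noncomputable def Delta (η : ℝ) : ℝ :=
  1 + 268 * Real.cos (η / 2) ^ 2 - 44 * Real.cos (η / 2) ^ 4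

noncomputable def Lama (η : ℝ) : ℝ :=
  120 * Real.sin (η / 2) ^ 2 / (11 + 4 * Real.cos (η / 2) ^ 2 + Real.sqrt (Delta η))

noncomputable def Lamo (η : ℝ) : ℝ :=
  (22 + 8 * Real.cos (η / 2) ^ 2 + 2 * Real.sqrt (Delta η)) / (1 + Real.sin (η / 2) ^ 2)

noncomputable def lama (η : ℝ) : ℝ := Real.sqrt (Lama η)

noncomputable def lamo (η : ℝ) : ℝ := Real.sqrt (Lamo η)

/-! Auxiliary lemmas -/

lemma sqrt225 : Real.sqrt 225 = 15 := by
  rw [show (225:ℝ) = 15^2 by norm_num, Real.sqrt_sq (by norm_num : (0:ℝ) ≤ 15)]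

-- derivative of η ↦ cos(η/2)^2
lemma hasDerivAt_g (x : ℝ) :
    HasDerivAt (fun η : ℝ => Real.cos (η / 2) ^ 2)
      (-(Real.cos (x / 2) * Real.sin (x / 2))) x := by
  have h1 : HasDerivAt (fun η : ℝ => η / 2) (1 / 2) x := (hasDerivAt_id x).div_const 2
  have h2 : HasDerivAt (fun η : ℝ => Real.cos (η / 2)) (-Real.sin (x / 2) * (1 / 2)) x :=
    by simpa [Function.comp_def] using (Real.hasDerivAt_cos (x / 2)).comp x h1
  have h3 : HasDerivAt (fun η : ℝ => Real.cos (η / 2) ^ 2) _ x := h2.pow 2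
  convert h3 using 1
  ring

lemma hg0 : HasDerivAt (fun η : ℝ => Real.cos (η / 2) ^ 2) 0 0 := by
  have := hasDerivAt_g 0
  simpa using this

lemma hgpi : HasDerivAt (fun η : ℝ => Real.cos (η / 2) ^ 2) 0 Real.pi := by
  have := hasDerivAt_g Real.pi
  simpa [Real.cos_pi_div_two] using this

lemma hFdiff (u : ℝ) (hp : 1 + 268 * u - 44 * u ^ 2 ≠ 0)
    (hd : 11 + 4 * u + Real.sqrt (1 + 268 * u - 44 * u ^ 2) ≠ 0) :
    DifferentiableAt ℝ
      (fun u : ℝ => 120 * (1 - u) / (11 + 4 * u + Real.sqrt (1 + 268 * u - 44 * u ^ 2))) u := by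
  have h1 : DifferentiableAt ℝ (fun u : ℝ => 1 + 268 * u - 44 * u ^ 2) u := by fun_prop
  have h2 : DifferentiableAt ℝ (fun u : ℝ => Real.sqrt (1 + 268 * u - 44 * u ^ 2)) u :=
    ((Real.hasDerivAt_sqrt hp).differentiableAt).comp u h1
  have h3 : DifferentiableAt ℝ (fun u : ℝ => 11 + 4 * u + Real.sqrt (1 + 268 * u - 44 * u ^ 2)) u := by
    exact (differentiableAt_const _).add ((differentiableAt_const _).mul (differentiableAt_id (x := u))) |>.add h2
  have h4 : DifferentiableAt ℝ (fun u : ℝ => 120 * (1 - u)) u := by fun_prop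
  exact h4.div h3 hd

lemma hGdiff (u : ℝ) (hp : 1 + 268 * u - 44 * u ^ 2 ≠ 0) (hd : (2 : ℝ) - u ≠ 0) :
    DifferentiableAt ℝ
      (fun u : ℝ => (22 + 8 * u + 2 * Real.sqrt (1 + 268 * u - 44 * u ^ 2)) / (2 - u)) u := by
  have h1 : DifferentiableAt ℝ (fun u : ℝ => 1 + 268 * u - 44 * u ^ 2) u := by fun_prop
  have h2 : DifferentiableAt ℝ (fun u : ℝ => Real.sqrt (1 + 268 * u - 44 * u ^ 2)) u :=
    ((Real.hasDerivAt_sqrt hp).differentiableAt).comp u h1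
  have h3 : DifferentiableAt ℝ (fun u : ℝ => 22 + 8 * u + 2 * Real.sqrt (1 + 268 * u - 44 * u ^ 2)) u := by
    exact ((differentiableAt_const _).add ((differentiableAt_const _).mul (differentiableAt_id (x := u)))).add
      ((differentiableAt_const _).mul h2)
  exact h3.div (by fun_prop) hd

lemma Lama_eq : Lama = fun η =>
    (fun u : ℝ => 120 * (1 - u) / (11 + 4 * u + Real.sqrt (1 + 268 * u - 44 * u ^ 2)))
      (Real.cos (η / 2) ^ 2) := by
  funext η
  simp only [Lama, Delta, Real.sin_sq]
  ring_nf

lemma Lamo_eq : Lamo = fun η =>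
    (fun u : ℝ => (22 + 8 * u + 2 * Real.sqrt (1 + 268 * u - 44 * u ^ 2)) / (2 - u))
      (Real.cos (η / 2) ^ 2) := by
  funext η
  simp only [Lamo, Delta, Real.sin_sq]
  ring_nf

lemma hLama0 : HasDerivAt Lama 0 0 := by
  rw [Lama_eq]
  have hval : Real.cos ((0:ℝ) / 2) ^ 2 = 1 := by norm_num
  have hF : DifferentiableAt ℝ
      (fun u : ℝ => 120 * (1 - u) / (11 + 4 * u + Real.sqrt (1 + 268 * u - 44 * u ^ 2)))
      (Real.cos ((0:ℝ) / 2) ^ 2) := by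
    rw [hval]
    apply hFdiff 1 (by norm_num)
    rw [show (1:ℝ) + 268 * 1 - 44 * 1 ^ 2 = 225 by norm_num, sqrt225]; norm_num
  have := hF.hasDerivAt.comp 0 hg0
  simpa [Function.comp_def] using this

lemma hLamapi : HasDerivAt Lama 0 Real.pi := by
  rw [Lama_eq]
  have hval : Real.cos (Real.pi / 2) ^ 2 = 0 := by simp [Real.cos_pi_div_two]
  have hF : DifferentiableAt ℝ
      (fun u : ℝ => 120 * (1 - u) / (11 + 4 * u + Real.sqrt (1 + 268 * u - 44 * u ^ 2)))
      (Real.cos (Real.pi / 2) ^ 2) := by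
    rw [hval]
    apply hFdiff 0 (by norm_num)
    rw [show (1:ℝ) + 268 * 0 - 44 * 0 ^ 2 = 1 by norm_num, Real.sqrt_one]; norm_num
  have := hF.hasDerivAt.comp Real.pi hgpi
  simpa [Function.comp_def] using this

lemma hLamo0 : HasDerivAt Lamo 0 0 := by
  rw [Lamo_eq]
  have hval : Real.cos ((0:ℝ) / 2) ^ 2 = 1 := by norm_num
  have hF : DifferentiableAt ℝ
      (fun u : ℝ => (22 + 8 * u + 2 * Real.sqrt (1 + 268 * u - 44 * u ^ 2)) / (2 - u))
      (Real.cos ((0:ℝ) / 2) ^ 2) := by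
    rw [hval]; exact hGdiff 1 (by norm_num) (by norm_num)
  have := hF.hasDerivAt.comp 0 hg0
  simpa [Function.comp_def] using this

lemma hLamopi : HasDerivAt Lamo 0 Real.pi := by
  rw [Lamo_eq]
  have hval : Real.cos (Real.pi / 2) ^ 2 = 0 := by simp [Real.cos_pi_div_two]
  have hF : DifferentiableAt ℝ
      (fun u : ℝ => (22 + 8 * u + 2 * Real.sqrt (1 + 268 * u - 44 * u ^ 2)) / (2 - u))
      (Real.cos (Real.pi / 2) ^ 2) := by
    rw [hval]; exact hGdiff 0 (by norm_num) (by norm_num)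
  have := hF.hasDerivAt.comp Real.pi hgpi
  simpa [Function.comp_def] using this

lemma Delta_zero : Delta 0 = 225 := by simp [Delta]; norm_num

lemma Delta_pi : Delta Real.pi = 1 := by simp [Delta, Real.cos_pi_div_two]

lemma Lama_pi : Lama Real.pi = 10 := by
  simp [Lama, Delta_pi, Real.cos_pi_div_two, Real.sin_pi_div_two, Real.sqrt_one]
  norm_num

lemma Lamo_zero : Lamo 0 = 60 := by
  simp [Lamo, Delta_zero, sqrt225]
  norm_num

lemma Lamo_pi : Lamo Real.pi = 12 := by
  simp [Lamo, Delta_pi, Real.cos_pi_div_two, Real.sin_pi_div_two, Real.sqrt_one]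
  norm_num

lemma hlamapi : HasDerivAt lama 0 Real.pi := by
  have hs : HasDerivAt Real.sqrt (1 / (2 * Real.sqrt (Lama Real.pi))) (Lama Real.pi) := by
    have : Lama Real.pi ≠ 0 := by rw [Lama_pi]; norm_num
    simpa using Real.hasDerivAt_sqrt this
  have := hs.comp Real.pi hLamapi
  simpa [show lama = fun x => √(Lama x) from rfl, Function.comp_def] using this

lemma hlamo0 : HasDerivAt lamo 0 0 := by
  have hs : HasDerivAt Real.sqrt (1 / (2 * Real.sqrt (Lamo 0))) (Lamo 0) := by
    have : Lamo 0 ≠ 0 := by rw [Lamo_zero]; norm_num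
    simpa using Real.hasDerivAt_sqrt this
  have := hs.comp 0 hLamo0
  simpa [show lamo = fun x => √(Lamo x) from rfl, Function.comp_def] using this

lemma hlamopi : HasDerivAt lamo 0 Real.pi := by
  have hs : HasDerivAt Real.sqrt (1 / (2 * Real.sqrt (Lamo Real.pi))) (Lamo Real.pi) := by
    have : Lamo Real.pi ≠ 0 := by rw [Lamo_pi]; norm_num
    simpa using Real.hasDerivAt_sqrt this
  have := hs.comp Real.pi hLamopi
  simpa [show lamo = fun x => √(Lamo x) from rfl, Function.comp_def] using this

lemma D_pos (η : ℝ) : 0 < 11 + 4 * Real.cos (η / 2) ^ 2 + Real.sqrt (Delta η) := by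
  have h1 : 0 ≤ Real.cos (η / 2) ^ 2 := sq_nonneg _
  have h2 : 0 ≤ Real.sqrt (Delta η) := Real.sqrt_nonneg _
  linarith

lemma Lama_nonneg (η : ℝ) : 0 ≤ Lama η :=
  div_nonneg (by positivity) (D_pos η).le

lemma hsinlim : Tendsto (fun η : ℝ => Real.sin (η / 2) / η) (nhdsWithin 0 (Set.Ioi 0)) (nhds (1/2)) := by
  have hd : HasDerivAt (fun η : ℝ => Real.sin (η / 2)) (1 / 2) 0 := by
    have := (Real.hasDerivAt_sin ((0:ℝ) / 2)).comp 0 ((hasDerivAt_id (0:ℝ)).div_const 2)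
    simpa [Function.comp_def] using this
  have h := hasDerivAt_iff_tendsto_slope.mp hd
  have h2 : Tendsto (slope (fun η : ℝ => Real.sin (η / 2)) 0) (nhdsWithin 0 (Set.Ioi 0)) (nhds (1/2)) :=
    h.mono_left (nhdsWithin_mono _ (fun x hx => ne_of_gt hx))
  refine h2.congr fun x => ?_
  simp [slope_def_field]

lemma hDlim : Tendsto (fun η : ℝ => 11 + 4 * Real.cos (η / 2) ^ 2 + Real.sqrt (Delta η))
    (nhdsWithin 0 (Set.Ioi 0)) (nhds 30) := by
  have hc : ContinuousAt (fun η : ℝ => 11 + 4 * Real.cos (η / 2) ^ 2 + Real.sqrt (Delta η)) 0 := by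
    apply ContinuousAt.add
    · fun_prop
    · exact Real.continuous_sqrt.continuousAt.comp (by unfold Delta; fun_prop)
  have hval : (fun η : ℝ => 11 + 4 * Real.cos (η / 2) ^ 2 + Real.sqrt (Delta η)) 0 = 30 := by
    simp [Delta_zero, sqrt225]; norm_num
  rw [← hval]
  exact hc.tendsto.mono_left nhdsWithin_le_nhds

lemma hLamalim : Tendsto (fun η : ℝ => Lama η / η ^ 2) (nhdsWithin 0 (Set.Ioi 0)) (nhds 1) := by
  have hmain : Tendsto (fun η : ℝ =>
      120 * (Real.sin (η / 2) / η) ^ 2 / (11 + 4 * Real.cos (η / 2) ^ 2 + Real.sqrt (Delta η)))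
      (nhdsWithin 0 (Set.Ioi 0)) (nhds (120 * (1/2) ^ 2 / 30)) := by
    exact (Filter.Tendsto.mul tendsto_const_nhds (hsinlim.pow 2)).div hDlim (by norm_num)
  have h30 : (120 : ℝ) * (1/2) ^ 2 / 30 = 1 := by norm_num
  rw [h30] at hmain
  refine hmain.congr' ?_
  filter_upwards [self_mem_nhdsWithin] with η hη
  have hη0 : η ≠ 0 := ne_of_gt hη
  have hD := (D_pos η).ne'
  simp only [Lama]
  rw [div_pow, mul_div_assoc', div_div, div_div, mul_comm (11 + 4 * Real.cos (η / 2) ^ 2 + Real.sqrt (Delta η)) (η ^ 2)]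

lemma hlamalim : Tendsto (fun η => lama η / η) (nhdsWithin 0 (Set.Ioi (0 : ℝ))) (nhds 1) := by
  have h1 : Tendsto (fun η : ℝ => Real.sqrt (Lama η / η ^ 2)) (nhdsWithin 0 (Set.Ioi 0)) (nhds 1) := by
    have := (Real.continuous_sqrt.continuousAt (x := (1:ℝ))).tendsto.comp hLamalim
    simpa [Function.comp_def] using this
  refine h1.congr' ?_
  filter_upwards [self_mem_nhdsWithin] with η hη
  rw [Real.sqrt_div (Lama_nonneg η), Real.sqrt_sq hη.le, lama]

theorem stmt_11 :
    HasDerivWithinAt Lama 0 (Set.Icc (0 : ℝ) Real.pi) 0 ∧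
    HasDerivWithinAt Lama 0 (Set.Icc (0 : ℝ) Real.pi) Real.pi ∧
    HasDerivWithinAt Lamo 0 (Set.Icc (0 : ℝ) Real.pi) 0 ∧
    HasDerivWithinAt Lamo 0 (Set.Icc (0 : ℝ) Real.pi) Real.pi ∧
    Filter.Tendsto (fun η => lama η / η) (nhdsWithin 0 (Set.Ioi (0 : ℝ))) (nhds 1) ∧
    HasDerivWithinAt lama 0 (Set.Icc (0 : ℝ) Real.pi) Real.pi ∧
    HasDerivWithinAt lamo 0 (Set.Icc (0 : ℝ) Real.pi) 0 ∧
    HasDerivWithinAt lamo 0 (Set.Icc (0 : ℝ) Real.pi) Real.pi :=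
  ⟨hLama0.hasDerivWithinAt, hLamapi.hasDerivWithinAt, hLamo0.hasDerivWithinAt,
   hLamopi.hasDerivWithinAt, hlamalim, hlamapi.hasDerivWithinAt, hlamo0.hasDerivWithinAt,
   hlamopi.hasDerivWithinAt⟩
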